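/- Let b_n be the number of permutations in S_n avoiding the generalized patterns 1-23 and 3-12. Then b_1 = 1, b_2 = 2, and for n ≥ 0, b_{n+2} = b_{n+1} + Σ_{k=0}^{n} binomial(n,k)·b_k, where b_0 = 1. -/

import Mathlib

/-- `π` contains the generalized pattern 1-23 (last two positions adjacent). -/
def Contains1'23 {n : ℕ} (π : Equiv.Perm (Fin n)) : Prop :=
  ∃ i j j' : Fin n, i < j ∧ (j' : ℕ) = (j : ℕ) + 1 ∧ π i < π j ∧ π j < π j'

/-- `π` contains the generalized pattern 3-12 (last two positions adjacent). -/
def Contains3'12 {n : ℕ} (π : Equiv.Perm (Fin n)) : Prop :=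
  ∃ i j j' : Fin n, i < j ∧ (j' : ℕ) = (j : ℕ) + 1 ∧ π j < π j' ∧ π j' < π i

/-- `b n` = number of permutations of length `n` avoiding 1-23 and 3-12. -/
noncomputable def b (n : ℕ) : ℕ :=
  Nat.card {π : Equiv.Perm (Fin n) // ¬ Contains1'23 π ∧ ¬ Contains3'12 π}



/-- A word is good if at every ascent (adjacent pair `l[j] < l[j+1]`), every earlier
letter lies strictly between them. -/
def Good (l : List ℕ) : Prop :=
  ∀ i j : ℕ, i < j → j + 1 < l.length →
    l.getD j 0 < l.getD (j+1) 0 → l.getD j 0 < l.getD i 0 ∧ l.getD i 0 < l.getD (j+1) 0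

lemma getD_mem' {l : List ℕ} {i : ℕ} (h : i < l.length) : l.getD i 0 ∈ l := by
  rw [List.getD_eq_getElem l 0 h]; exact List.getElem_mem h

lemma good_append_singleton {u : List ℕ} {a : ℕ} (h : ∀ x ∈ u, a < x) :
    Good (u ++ [a]) ↔ Good u := by
  constructor
  · intro H i j hij hj hasc
    have hj' : j + 1 < (u ++ [a]).length := by simp; omega
    have e1 : (u ++ [a]).getD i 0 = u.getD i 0 := List.getD_append _ _ _ _ (by omega)
    have e2 : (u ++ [a]).getD j 0 = u.getD j 0 := List.getD_append _ _ _ _ (by omega)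
    have e3 : (u ++ [a]).getD (j+1) 0 = u.getD (j+1) 0 := List.getD_append _ _ _ _ (by omega)
    have := H i j hij hj' (by rw [e2, e3]; exact hasc)
    rw [e1, e2, e3] at this; exact this
  · intro H i j hij hj hasc
    simp only [List.length_append, List.length_cons, List.length_nil] at hj
    rcases lt_or_eq_of_le (Nat.lt_succ_iff.mp hj) with hlt | heq
    · have e1 : (u ++ [a]).getD i 0 = u.getD i 0 := List.getD_append _ _ _ _ (by omega)
      have e2 : (u ++ [a]).getD j 0 = u.getD j 0 := List.getD_append _ _ _ _ (by omega)
      have e3 : (u ++ [a]).getD (j+1) 0 = u.getD (j+1) 0 := List.getD_append _ _ _ _ (by omega)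
      rw [e2, e3] at hasc
      rw [e1, e2, e3]
      exact H i j hij hlt hasc
    · -- j + 1 = u.length : the pair is (last of u, a), but a < everything: contradiction
      exfalso
      have e2 : (u ++ [a]).getD j 0 = u.getD j 0 := List.getD_append _ _ _ _ (by omega)
      have e3 : (u ++ [a]).getD (j+1) 0 = a := by
        rw [List.getD_append_right _ _ _ _ (by omega)]
        simp [heq]
      rw [e2, e3] at hasc
      exact absurd hasc (not_lt.2 (le_of_lt (h _ (getD_mem' (by omega)))))

lemma good_append_cons {u v : List ℕ} {a : ℕ} (hv : v ≠ []) (hnd : v.Nodup)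
    (ha : ∀ x ∈ u ++ v, a < x) :
    Good (u ++ a :: v) ↔ Good u ∧ v.Chain' (· > ·) ∧ ∀ x ∈ u, x < v.headD 0 := by
  have hvlen : 0 < v.length := List.length_pos_iff.2 hv
  have len : (u ++ a :: v).length = u.length + 1 + v.length := by simp; omega
  -- getD facts
  have gu : ∀ i < u.length, (u ++ a :: v).getD i 0 = u.getD i 0 := fun i hi =>
    List.getD_append _ _ _ _ hi
  have gA : (u ++ a :: v).getD u.length 0 = a := by
    rw [List.getD_append_right _ _ _ _ le_rfl]; simp
  have gv : ∀ q, (u ++ a :: v).getD (u.length + 1 + q) 0 = v.getD q 0 := by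
    intro q
    rw [List.getD_append_right _ _ _ _ (by omega)]
    have : u.length + 1 + q - u.length = q + 1 := by omega
    rw [this]; simp
  have hhead : v.headD 0 = v.getD 0 0 := by cases v <;> simp_all
  constructor
  · intro H
    refine ⟨?_, ?_, ?_⟩
    · intro i j hij hj hasc
      have hj' : j + 1 < (u ++ a :: v).length := by omega
      have := H i j hij hj' (by rw [gu j (by omega), gu (j+1) (by omega)]; exact hasc)
      rw [gu i (by omega), gu j (by omega), gu (j+1) (by omega)] at this; exact this
    · -- no ascent inside v
      refine List.isChain_iff_getElem.2 ?_
      intro q hq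
      by_contra hcon
      push_neg at hcon
      have hq1 : q + 1 < v.length := by omega
      have hlt : v.getD q 0 < v.getD (q+1) 0 := by
        rw [List.getD_eq_getElem _ _ (show q < v.length by omega), List.getD_eq_getElem _ _ hq1]
        rcases hcon.lt_or_eq with h | h
        · exact h
        · exact absurd (hnd.getElem_inj_iff.1 h) (by omega)
      have hasc : (u ++ a :: v).getD (u.length + 1 + q) 0 < (u ++ a :: v).getD (u.length + 1 + q + 1) 0 := by
        have e : u.length + 1 + q + 1 = u.length + 1 + (q+1) := by omega
        rw [gv q, e, gv (q+1)]
        exact hlt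
      have := H u.length (u.length + 1 + q) (by omega) (by omega) hasc
      rw [gA, gv q] at this
      exact absurd this.1 (not_lt.2 (le_of_lt (ha _ (List.mem_append.2 (Or.inr (getD_mem' (show q < v.length by omega)))))))
    · intro x hx
      obtain ⟨i, hi, rfl⟩ : ∃ i, ∃ h : i < u.length, u.getD i 0 = x := by
        obtain ⟨i, hi, hx⟩ := List.getElem_of_mem hx
        exact ⟨i, hi, by rw [List.getD_eq_getElem _ _ hi]; exact hx⟩
      have hasc : (u ++ a :: v).getD u.length 0 < (u ++ a :: v).getD (u.length + 1) 0 := by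
        rw [gA]
        have := gv 0
        rw [show u.length + 1 + 0 = u.length + 1 by omega] at this
        rw [this]
        exact ha _ (List.mem_append.2 (Or.inr (getD_mem' (show 0 < v.length by omega))))
      have := H i u.length (by omega) (by omega) hasc
      rw [gu i hi, gA] at this
      have := this.2
      rw [hhead]
      have e := gv 0
      rw [show u.length + 1 + 0 = u.length + 1 by omega] at e
      rw [e] at this
      exact this
  · rintro ⟨Hu, Hchain, Hhd⟩ i j hij hj hasc
    rw [len] at hj
    -- classify position j
    rcases lt_trichotomy (j+1) u.length with h1 | h1 | h1
    · -- ascent inside u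
      rw [gu i (by omega), gu j (by omega), gu (j+1) (by omega)] at *
      exact Hu i j hij (by omega) hasc
    · -- pair (last u, a): not ascent
      exfalso
      rw [gu j (by omega), show j + 1 = u.length from h1, gA] at hasc
      exact absurd hasc (not_lt.2 (le_of_lt (ha _ (List.mem_append.2 (Or.inl (getD_mem' (show j < u.length by omega)))))))
    · rcases lt_trichotomy j u.length with h2 | h2 | h2
      · omega
      · -- ascent (a, v.head); i indexes u
        subst h2
        have e := gv 0
        rw [show u.length + 1 + 0 = u.length + 1 by omega] at e
        rw [gu i hij, gA, e]
        have hmem : u.getD i 0 ∈ u := getD_mem' hij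
        refine ⟨ha _ (List.mem_append.2 (Or.inl hmem)), ?_⟩
        rw [← hhead]
        exact Hhd _ hmem
      · -- ascent inside v: contradiction with chain
        exfalso
        obtain ⟨q, rfl⟩ : ∃ q, j = u.length + 1 + q := ⟨j - u.length - 1, by omega⟩
        rw [gv q, show u.length + 1 + q + 1 = u.length + 1 + (q+1) by omega, gv (q+1)] at hasc
        replace Hchain := List.isChain_iff_getElem.1 Hchain
        have := Hchain q (by omega)
        have hq : q < v.length := by omega
        have hq1 : q + 1 < v.length := by omega
        rw [List.getD_eq_getElem v 0 hq, List.getD_eq_getElem v 0 hq1] at hasc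
        omega

lemma good_map {l : List ℕ} {f : ℕ → ℕ}
    (hf : ∀ x ∈ l, ∀ y ∈ l, (f x < f y ↔ x < y)) : Good (l.map f) ↔ Good l := by
  have len : (l.map f).length = l.length := by simp
  have g : ∀ i < l.length, (l.map f).getD i 0 = f (l.getD i 0) := by
    intro i hi
    rw [List.getD_eq_getElem _ _ (by omega), List.getD_eq_getElem _ _ hi]
    simp
  constructor
  · intro H i j hij hj hasc
    have m1 : l.getD i 0 ∈ l := getD_mem' (by omega)
    have m2 : l.getD j 0 ∈ l := getD_mem' (by omega)
    have m3 : l.getD (j+1) 0 ∈ l := getD_mem' (by omega)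
    have := H i j hij (by omega) (by rw [g j (by omega), g (j+1) (by omega)]; exact (hf _ m2 _ m3).2 hasc)
    rw [g i (by omega), g j (by omega), g (j+1) (by omega)] at this
    exact ⟨(hf _ m2 _ m1).1 this.1, (hf _ m1 _ m3).1 this.2⟩
  · intro H i j hij hj hasc
    rw [len] at hj
    have m1 : l.getD i 0 ∈ l := getD_mem' (by omega)
    have m2 : l.getD j 0 ∈ l := getD_mem' (by omega)
    have m3 : l.getD (j+1) 0 ∈ l := getD_mem' (by omega)
    rw [g j (by omega), g (j+1) (by omega)] at hasc
    have := H i j hij (by omega) ((hf _ m2 _ m3).1 hasc)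
    rw [g i (by omega), g j (by omega), g (j+1) (by omega)]
    exact ⟨(hf _ m2 _ m1).2 this.1, (hf _ m1 _ m3).2 this.2⟩

/-- the word of a permutation -/
def pword {m : ℕ} (π : Equiv.Perm (Fin m)) : List ℕ := List.ofFn (fun i => (π i : ℕ))

lemma pword_getD {m : ℕ} (π : Equiv.Perm (Fin m)) {i : ℕ} (h : i < m) :
    (pword π).getD i 0 = (π ⟨i, h⟩ : ℕ) := by
  rw [pword, List.getD_eq_getElem _ _ (by simpa using h)]
  simp

lemma avoid_iff_good {m : ℕ} (π : Equiv.Perm (Fin m)) :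
    (¬ Contains1'23 π ∧ ¬ Contains3'12 π) ↔ Good (pword π) := by
  have hlen : (pword π).length = m := by simp [pword]
  constructor
  · rintro ⟨h1, h2⟩ i j hij hj hasc
    rw [hlen] at hj
    have hi : i < m := by omega
    have hjm : j < m := by omega
    rw [pword_getD π hjm, pword_getD π hj] at hasc
    rw [pword_getD π hi, pword_getD π hjm, pword_getD π hj]
    have hfij : (⟨i, hi⟩ : Fin m) < ⟨j, hjm⟩ := hij
    have hasc' : π ⟨j, hjm⟩ < π ⟨j+1, hj⟩ := hasc
    constructor
    · by_contra hc
      push_neg at hc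
      have hne : π ⟨i, hi⟩ ≠ π ⟨j, hjm⟩ := fun h => by
        have := π.injective h
        simp [Fin.ext_iff] at this; omega
      have : π ⟨i, hi⟩ < π ⟨j, hjm⟩ := lt_of_le_of_ne (by exact_mod_cast hc) hne
      exact h1 ⟨_, _, _, hfij, rfl, this, hasc'⟩
    · by_contra hc
      push_neg at hc
      have hne : π ⟨j+1, hj⟩ ≠ π ⟨i, hi⟩ := fun h => by
        have := π.injective h
        simp [Fin.ext_iff] at this; omega
      have : π ⟨j+1, hj⟩ < π ⟨i, hi⟩ := lt_of_le_of_ne (by exact_mod_cast hc) hne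
      exact h2 ⟨_, _, _, hfij, rfl, hasc', this⟩
  · intro H
    constructor
    · rintro ⟨i, j, j', hij, hjj', hlt1, hlt2⟩
      have hj' : (j : ℕ) + 1 < m := by rw [← hjj']; exact j'.isLt
      have := H i j hij (by omega) (by
        rw [pword_getD π (by omega), pword_getD π hj']
        have : (⟨(j:ℕ)+1, hj'⟩ : Fin m) = j' := by simp [Fin.ext_iff]; omega
        rw [this]
        exact_mod_cast hlt2)
      rw [pword_getD π (by omega : (i:ℕ) < m), pword_getD π (by omega : (j:ℕ) < m)] at this
      have h1 := this.1
      simp only [Fin.eta] at h1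
      exact absurd hlt1 (not_lt.2 (le_of_lt (by exact_mod_cast h1)))
    · rintro ⟨i, j, j', hij, hjj', hlt1, hlt2⟩
      have hj' : (j : ℕ) + 1 < m := by rw [← hjj']; exact j'.isLt
      have := H i j hij (by omega) (by
        rw [pword_getD π (by omega), pword_getD π hj']
        have : (⟨(j:ℕ)+1, hj'⟩ : Fin m) = j' := by simp [Fin.ext_iff]; omega
        rw [this]
        exact_mod_cast hlt1)
      rw [pword_getD π (by omega : (i:ℕ) < m), pword_getD π (by omega : (j:ℕ) < m)] at this
      have h2 := this.2
      simp only [Fin.eta] at h2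
      rw [pword_getD π hj'] at h2
      have : (⟨(j:ℕ)+1, hj'⟩ : Fin m) = j' := by simp [Fin.ext_iff]; omega
      rw [this] at h2
      exact absurd hlt2 (not_lt.2 (le_of_lt (by exact_mod_cast h2)))

/-- good words with letter set `A` -/
def GW (A : Finset ℕ) : Type := {l : List ℕ // l.Nodup ∧ l.toFinset = A ∧ Good l}

lemma GW_length {A : Finset ℕ} (l : GW A) : l.1.length = A.card := by
  obtain ⟨l, hnd, hA, hG⟩ := l
  simp only
  rw [← hA]
  exact (List.toFinset_card_of_nodup hnd).symm

instance GW_finite (A : Finset ℕ) : Finite (GW A) := by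
  have : Function.Injective (fun l : GW A => fun i : Fin A.card =>
      (⟨l.1.getD i 0, by
        have : l.1.getD i 0 ∈ l.1.toFinset := List.mem_toFinset.2 (getD_mem' (by rw [GW_length]; exact i.2))
        rw [l.2.2.1] at this; exact this⟩ : A)) := by
    intro l l' h
    apply Subtype.ext
    apply List.ext_getElem (by rw [GW_length, GW_length])
    intro i h1 h2
    have hi : i < A.card := by rw [← GW_length l]; exact h1
    have := congrFun h ⟨i, hi⟩
    simp only [Subtype.mk.injEq] at this
    rwa [List.getD_eq_getElem _ _ h1, List.getD_eq_getElem _ _ h2] at this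
  exact Finite.of_injective _ this

noncomputable def W (A : Finset ℕ) : ℕ := Nat.card (GW A)

lemma b_eq_W (m : ℕ) : b m = W (Finset.range m) := by
  apply Nat.card_eq_of_bijective (fun π => (⟨pword π.1, by
    refine ⟨?_, ?_, (avoid_iff_good π.1).1 π.2⟩
    · rw [pword]
      exact List.nodup_ofFn.mpr (fun i j h => π.1.injective (Fin.val_injective h))
    · ext x
      simp only [pword, List.mem_toFinset, List.mem_ofFn, Finset.mem_range]
      constructor
      · rintro ⟨i, rfl⟩; exact (π.1 i).2
      · intro hx
        exact ⟨π.1.symm ⟨x, hx⟩, by simp⟩⟩ : GW (Finset.range m)))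
  constructor
  · intro π π' h
    have h' : pword π.1 = pword π'.1 := congrArg Subtype.val h
    apply Subtype.ext
    apply Equiv.ext
    intro i
    have : (π.1 i : ℕ) = (π'.1 i : ℕ) := by
      have e1 := pword_getD π.1 i.2
      have e2 := pword_getD π'.1 i.2
      rw [h'] at e1
      rw [Fin.eta] at e1 e2
      omega
    exact Fin.val_injective this
  · rintro ⟨l, hnd, hA, hG⟩
    have hlen : l.length = m := by
      have := List.toFinset_card_of_nodup hnd
      rw [hA, Finset.card_range] at this
      omega
    have hmem : ∀ {i : ℕ}, i < m → l.getD i 0 < m := by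
      intro i hi
      have : l.getD i 0 ∈ l.toFinset := List.mem_toFinset.2 (getD_mem' (by omega))
      rw [hA] at this
      exact Finset.mem_range.1 this
    set g : Fin m → Fin m := fun i => ⟨l.getD i 0, hmem i.2⟩ with hg
    have hginj : Function.Injective g := by
      intro i j hij
      have : l.getD i 0 = l.getD j 0 := congrArg Fin.val hij
      rw [List.getD_eq_getElem _ _ (by omega : (i:ℕ) < l.length),
        List.getD_eq_getElem _ _ (by omega : (j:ℕ) < l.length)] at this
      exact Fin.ext (hnd.getElem_inj_iff.1 this)
    have hgbij := Finite.injective_iff_bijective.1 hginj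
    set π : Equiv.Perm (Fin m) := Equiv.ofBijective g hgbij with hπ
    have hword : pword π = l := by
      apply List.ext_getElem (by simp [pword, hlen])
      intro i h1 h2
      have hi : i < m := by simpa [pword] using h1
      have := pword_getD π hi
      rw [List.getD_eq_getElem _ _ h1] at this
      rw [this]
      show (g ⟨i, hi⟩ : ℕ) = l[i]
      rw [hg]
      simp only
      rw [List.getD_eq_getElem _ _ h2]
    refine ⟨⟨π, (avoid_iff_good π).2 (by rw [hword]; exact hG)⟩, ?_⟩
    apply Subtype.ext
    exact hword

section Invariance

variable {A B : Finset ℕ}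

/-- transport a good word along a strictly monotone correspondence -/
def GWmap (f : ℕ → ℕ) (hfmono : ∀ x ∈ A, ∀ y ∈ A, (f x < f y ↔ x < y))
    (hfim : A.image f = B) (l : GW A) : GW B :=
  ⟨l.1.map f, by
    apply List.Nodup.map_on _ l.2.1
    intro x hx y hy hxy
    have hx' : x ∈ A := by rw [← l.2.2.1]; exact List.mem_toFinset.2 hx
    have hy' : y ∈ A := by rw [← l.2.2.1]; exact List.mem_toFinset.2 hy
    by_contra hne
    rcases lt_or_gt_of_ne hne with h | h
    · exact absurd ((hfmono x hx' y hy').2 h) (by omega)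
    · exact absurd ((hfmono y hy' x hx').2 h) (by omega), by
    ext y
    rw [← hfim]
    simp only [List.mem_toFinset, List.mem_map, Finset.mem_image]
    constructor
    · rintro ⟨x, hx, rfl⟩
      exact ⟨x, by rw [← l.2.2.1]; exact List.mem_toFinset.2 hx, rfl⟩
    · rintro ⟨x, hx, rfl⟩
      refine ⟨x, ?_, rfl⟩
      rw [← l.2.2.1] at hx
      exact List.mem_toFinset.1 hx, by
    apply (good_map ?_).2 l.2.2.2
    intro x hx y hy
    exact hfmono x (by rw [← l.2.2.1]; exact List.mem_toFinset.2 hx)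
      y (by rw [← l.2.2.1]; exact List.mem_toFinset.2 hy)⟩

lemma W_eq_of_card (h : A.card = B.card) : W A = W B := by
  set eAB : {x // x ∈ A} ≃o {x // x ∈ B} :=
    (A.orderIsoOfFin rfl).symm.trans ((Fin.castOrderIso h).trans (B.orderIsoOfFin rfl)) with heAB
  set f : ℕ → ℕ := fun x => if hx : x ∈ A then (eAB ⟨x, hx⟩ : ℕ) else 0 with hf
  set f' : ℕ → ℕ := fun y => if hy : y ∈ B then (eAB.symm ⟨y, hy⟩ : ℕ) else 0 with hf'
  have hfa : ∀ x (hx : x ∈ A), f x = (eAB ⟨x, hx⟩ : ℕ) := fun x hx => by simp [hf, hx]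
  have hf'b : ∀ y (hy : y ∈ B), f' y = (eAB.symm ⟨y, hy⟩ : ℕ) := fun y hy => by simp [hf', hy]
  have hmono : ∀ x ∈ A, ∀ y ∈ A, (f x < f y ↔ x < y) := by
    intro x hx y hy
    rw [hfa x hx, hfa y hy]
    rw [show ((eAB ⟨x, hx⟩ : {x // x ∈ B}) : ℕ) < (eAB ⟨y, hy⟩ : {x // x ∈ B}) ↔
      (eAB ⟨x, hx⟩) < (eAB ⟨y, hy⟩) from Iff.rfl]
    rw [OrderIso.lt_iff_lt]
    exact Iff.rfl
  have hmono' : ∀ x ∈ B, ∀ y ∈ B, (f' x < f' y ↔ x < y) := by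
    intro x hx y hy
    rw [hf'b x hx, hf'b y hy]
    rw [show ((eAB.symm ⟨x, hx⟩ : {x // x ∈ A}) : ℕ) < (eAB.symm ⟨y, hy⟩ : {x // x ∈ A}) ↔
      (eAB.symm ⟨x, hx⟩) < (eAB.symm ⟨y, hy⟩) from Iff.rfl]
    rw [OrderIso.lt_iff_lt]
    exact Iff.rfl
  have him : A.image f = B := by
    ext y
    simp only [Finset.mem_image]
    constructor
    · rintro ⟨x, hx, rfl⟩
      rw [hfa x hx]
      exact (eAB ⟨x, hx⟩).2
    · intro hy
      refine ⟨(eAB.symm ⟨y, hy⟩ : ℕ), (eAB.symm ⟨y, hy⟩).2, ?_⟩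
      rw [hfa _ (eAB.symm ⟨y, hy⟩).2]
      congr 1
      rw [show (⟨(eAB.symm ⟨y, hy⟩ : ℕ), (eAB.symm ⟨y, hy⟩).2⟩ : {x // x ∈ A}) = eAB.symm ⟨y, hy⟩
        from Subtype.ext rfl]
      simp
  have him' : B.image f' = A := by
    ext x
    simp only [Finset.mem_image]
    constructor
    · rintro ⟨y, hy, rfl⟩
      rw [hf'b y hy]
      exact (eAB.symm ⟨y, hy⟩).2
    · intro hx
      refine ⟨(eAB ⟨x, hx⟩ : ℕ), (eAB ⟨x, hx⟩).2, ?_⟩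
      rw [hf'b _ (eAB ⟨x, hx⟩).2]
      congr 1
      rw [show (⟨(eAB ⟨x, hx⟩ : ℕ), (eAB ⟨x, hx⟩).2⟩ : {x // x ∈ B}) = eAB ⟨x, hx⟩
        from Subtype.ext rfl]
      simp
  have hcomp : ∀ x ∈ A, f' (f x) = x := by
    intro x hx
    rw [hfa x hx, hf'b _ (eAB ⟨x, hx⟩).2]
    rw [show (⟨(eAB ⟨x, hx⟩ : ℕ), (eAB ⟨x, hx⟩).2⟩ : {x // x ∈ B}) = eAB ⟨x, hx⟩
      from Subtype.ext rfl]
    simp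
  have hcomp' : ∀ y ∈ B, f (f' y) = y := by
    intro y hy
    rw [hf'b y hy, hfa _ (eAB.symm ⟨y, hy⟩).2]
    rw [show (⟨(eAB.symm ⟨y, hy⟩ : ℕ), (eAB.symm ⟨y, hy⟩).2⟩ : {x // x ∈ A}) = eAB.symm ⟨y, hy⟩
      from Subtype.ext rfl]
    simp
  apply Nat.card_congr
  refine ⟨GWmap f hmono him, GWmap f' hmono' him', ?_, ?_⟩
  · intro l
    apply Subtype.ext
    show (l.1.map f).map f' = l.1
    rw [List.map_map]
    rw [List.map_congr_left (g := id) ?_, List.map_id]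
    intro x hx
    exact hcomp x (by rw [← l.2.2.1]; exact List.mem_toFinset.2 hx)
  · intro l
    apply Subtype.ext
    show (l.1.map f').map f = l.1
    rw [List.map_map]
    rw [List.map_congr_left (g := id) ?_, List.map_id]
    intro x hx
    exact hcomp' x (by rw [← l.2.2.1]; exact List.mem_toFinset.2 hx)

end Invariance

/-- descending sort of a finset -/
def desc (S : Finset ℕ) : List ℕ := (S.sort (· ≤ ·)).reverse

lemma desc_nodup (S : Finset ℕ) : (desc S).Nodup := by
  rw [desc, List.nodup_reverse]; exact S.sort_nodup _

lemma desc_toFinset (S : Finset ℕ) : (desc S).toFinset = S := by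
  rw [desc, List.toFinset_reverse, Finset.sort_toFinset]

lemma desc_pairwise (S : Finset ℕ) : (desc S).Pairwise (· > ·) := by
  rw [desc, List.pairwise_reverse]
  exact List.sortedLT_iff_pairwise.1 S.sortedLT_sort

lemma desc_chain' (S : Finset ℕ) : (desc S).Chain' (· > ·) :=
  List.isChain_iff_pairwise.2 (desc_pairwise S)

lemma desc_ne_nil {S : Finset ℕ} (h : S.Nonempty) : desc S ≠ [] := by
  intro hc
  have : S = ∅ := by rw [← desc_toFinset S, hc]; rfl
  rw [this] at h
  exact Finset.not_nonempty_empty h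

lemma head_eq_max {v : List ℕ} {M : ℕ} (hnd : v.Nodup) (hp : v.Pairwise (· > ·))
    (hM : M ∈ v) (hle : ∀ x ∈ v, x ≤ M) : v.headD 0 = M := by
  cases v with
  | nil => simp at hM
  | cons c t =>
    simp only [List.headD_cons]
    rcases List.mem_cons.1 hM with h | h
    · omega
    · have := (List.pairwise_cons.1 hp).1 M h
      have := hle c (by simp)
      omega

lemma eq_desc_of_sorted {v : List ℕ} (hnd : v.Nodup) (hp : v.Pairwise (· > ·)) :
    v = desc v.toFinset := by
  haveI : IsAntisymm ℕ (· > ·) := ⟨fun a b h1 h2 => absurd h1 (asymm h2)⟩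
  exact List.Perm.eq_of_pairwise' (r := (· > ·)) hp (desc_pairwise _)
    (List.perm_of_nodup_nodup_toFinset_eq hnd (desc_nodup _) (by rw [desc_toFinset]))

lemma split_unique {a : ℕ} : ∀ {u₁ u₂ v₁ v₂ : List ℕ},
    u₁ ++ a :: v₁ = u₂ ++ a :: v₂ → a ∉ u₁ → a ∉ u₂ → u₁ = u₂ ∧ v₁ = v₂ := by
  intro u₁
  induction u₁ with
  | nil =>
    intro u₂ v₁ v₂ h h1 h2
    cases u₂ with
    | nil => simpa using h
    | cons c s =>
      simp only [List.nil_append, List.cons_append, List.cons.injEq] at h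
      obtain ⟨rfl, -⟩ := h
      exact absurd (List.mem_cons_self) h2
  | cons b t ih =>
    intro u₂ v₁ v₂ h h1 h2
    cases u₂ with
    | nil =>
      simp only [List.nil_append, List.cons_append, List.cons.injEq] at h
      obtain ⟨rfl, -⟩ := h
      exact absurd (List.mem_cons_self) h1
    | cons c s =>
      simp only [List.cons_append, List.cons.injEq] at h
      obtain ⟨rfl, h⟩ := h
      have := ih h (fun hm => h1 (List.mem_cons_of_mem _ hm)) (fun hm => h2 (List.mem_cons_of_mem _ hm))
      exact ⟨by rw [this.1], this.2⟩

section Main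

variable {A : Finset ℕ} {a M : ℕ}

/-- the decomposition target type -/
def T (A : Finset ℕ) (a M : ℕ) : Type :=
  GW (A.erase a) ⊕ (Σ V : ((A \ {a, M}).powerset : Finset (Finset ℕ)), GW ((A \ {a, M}) \ V.1))

variable (haA : a ∈ A) (hMA : M ∈ A) (haM : a ≠ M)
  (hmin : ∀ x ∈ A, a ≤ x) (hmax : ∀ x ∈ A, x ≤ M)

lemma memC {x : ℕ} : x ∈ A \ {a, M} ↔ x ∈ A ∧ x ≠ a ∧ x ≠ M := by
  simp only [Finset.mem_sdiff, Finset.mem_insert, Finset.mem_singleton]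
  tauto

def gmap : T A a M → GW A
  | Sum.inl u => ⟨u.1 ++ [a], by
      have hu : ∀ x ∈ u.1, x ∈ A ∧ x ≠ a := by
        intro x hx
        have : x ∈ A.erase a := by rw [← u.2.2.1]; exact List.mem_toFinset.2 hx
        exact ⟨Finset.mem_of_mem_erase this, Finset.ne_of_mem_erase this⟩
      have halt : ∀ x ∈ u.1, a < x := fun x hx =>
        lt_of_le_of_ne (hmin x (hu x hx).1) (Ne.symm (hu x hx).2)
      refine ⟨?_, ?_, (good_append_singleton halt).2 u.2.2.2⟩
      · rw [List.nodup_append]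
        exact ⟨u.2.1, List.nodup_singleton a, fun x hx y hy hxy => (hu x hx).2 (by simp at hy; omega)⟩
      · rw [List.toFinset_append, u.2.2.1]
        simp only [List.toFinset_cons, List.toFinset_nil, LawfulSingleton.insert_empty_eq]
        rw [Finset.union_comm, ← Finset.insert_eq, Finset.insert_erase haA]⟩
  | Sum.inr ⟨V, u⟩ => ⟨u.1 ++ a :: desc (insert M V.1), by
      have hVC : V.1 ⊆ A \ {a, M} := Finset.mem_powerset.1 V.2
      set v := desc (insert M V.1) with hv
      have hvset : v.toFinset = insert M V.1 := desc_toFinset _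
      have hvmem : ∀ x ∈ v, x ∈ A ∧ x ≠ a := by
        intro x hx
        have : x ∈ insert M V.1 := by rw [← hvset]; exact List.mem_toFinset.2 hx
        rcases Finset.mem_insert.1 this with h | h
        · exact ⟨h ▸ hMA, h ▸ (Ne.symm haM)⟩
        · have := memC.1 (hVC h)
          exact ⟨this.1, this.2.1⟩
      have humem : ∀ x ∈ u.1, x ∈ A ∧ x ≠ a ∧ x ≠ M ∧ x ∉ V.1 := by
        intro x hx
        have : x ∈ (A \ {a, M}) \ V.1 := by rw [← u.2.2.1]; exact List.mem_toFinset.2 hx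
        have h1 := Finset.mem_sdiff.1 this
        have h2 := memC.1 h1.1
        exact ⟨h2.1, h2.2.1, h2.2.2, h1.2⟩
      have hvne : v ≠ [] := desc_ne_nil (Finset.insert_nonempty _ _)
      have hvnd : v.Nodup := desc_nodup _
      have hhd : v.headD 0 = M := head_eq_max hvnd (desc_pairwise _)
        (by rw [← List.mem_toFinset, hvset]; exact Finset.mem_insert_self _ _)
        (fun x hx => hmax x (hvmem x hx).1)
      have ha' : ∀ x ∈ u.1 ++ v, a < x := by
        intro x hx
        rcases List.mem_append.1 hx with h | h
        · have := humem x h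
          exact lt_of_le_of_ne (hmin x this.1) (Ne.symm this.2.1)
        · have := hvmem x h
          exact lt_of_le_of_ne (hmin x this.1) (Ne.symm this.2)
      refine ⟨?_, ?_, ?_⟩
      · rw [List.nodup_append]
        refine ⟨u.2.1, ?_, ?_⟩
        · rw [List.nodup_cons]
          exact ⟨fun hc => (hvmem a hc).2 rfl, hvnd⟩
        · intro x hx y hx' hxy
          subst hxy
          rcases List.mem_cons.1 hx' with h | h
          · exact (humem x hx).2.1 h
          · have : x ∈ insert M V.1 := by rw [← hvset]; exact List.mem_toFinset.2 h
            rcases Finset.mem_insert.1 this with h2 | h2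
            · exact (humem x hx).2.2.1 h2
            · exact (humem x hx).2.2.2 h2
      · rw [List.toFinset_append, List.toFinset_cons, hvset, u.2.2.1]
        ext x
        simp only [Finset.mem_union, Finset.mem_insert, Finset.mem_sdiff,
          Finset.mem_singleton]
        constructor
        · rintro (⟨⟨hxA, -⟩, -⟩ | rfl | rfl | hxV)
          · exact hxA
          · exact haA
          · exact hMA
          · exact (memC.1 (hVC hxV)).1
        · intro hxA
          by_cases h1 : x = a
          · exact Or.inr (Or.inl h1)
          by_cases h2 : x = M
          · exact Or.inr (Or.inr (Or.inl h2))
          by_cases h3 : x ∈ V.1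
          · exact Or.inr (Or.inr (Or.inr h3))
          · exact Or.inl ⟨⟨hxA, by tauto⟩, h3⟩
      · refine (good_append_cons hvne hvnd ha').2 ⟨u.2.2.2, desc_chain' _, ?_⟩
        intro x hx
        rw [hhd]
        have := humem x hx
        exact lt_of_le_of_ne (hmax x this.1) this.2.2.1⟩

lemma gmap_bijective : Function.Bijective (gmap (A := A) (a := a) (M := M) haA hMA haM hmin hmax) := by
  constructor
  · intro x y hxy
    have hval := congrArg Subtype.val hxy
    match x, y with
    | Sum.inl u₁, Sum.inl u₂ =>
      have h : u₁.1 ++ a :: [] = u₂.1 ++ a :: [] := hval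
      have hna : ∀ (u : GW (A.erase a)), a ∉ u.1 := by
        intro u hc
        have : a ∈ A.erase a := by rw [← u.2.2.1]; exact List.mem_toFinset.2 hc
        exact (Finset.notMem_erase a A) this
      have := split_unique h (hna u₁) (hna u₂)
      rw [Subtype.ext this.1]
    | Sum.inl u₁, Sum.inr ⟨V, u₂⟩ =>
      exfalso
      have h : u₁.1 ++ a :: [] = u₂.1 ++ a :: desc (insert M V.1) := hval
      have hna₁ : a ∉ u₁.1 := by
        intro hc
        have : a ∈ A.erase a := by rw [← u₁.2.2.1]; exact List.mem_toFinset.2 hc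
        exact (Finset.notMem_erase a A) this
      have hna₂ : a ∉ u₂.1 := by
        intro hc
        have h' : a ∈ (A \ {a, M}) \ V.1 := by rw [← u₂.2.2.1]; exact List.mem_toFinset.2 hc
        exact (memC.1 (Finset.mem_sdiff.1 h').1).2.1 rfl
      have := (split_unique h hna₁ hna₂).2
      exact desc_ne_nil (Finset.insert_nonempty _ _) this.symm
    | Sum.inr ⟨V, u₂⟩, Sum.inl u₁ =>
      exfalso
      have h : u₂.1 ++ a :: desc (insert M V.1) = u₁.1 ++ a :: [] := hval
      have hna₁ : a ∉ u₁.1 := by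
        intro hc
        have : a ∈ A.erase a := by rw [← u₁.2.2.1]; exact List.mem_toFinset.2 hc
        exact (Finset.notMem_erase a A) this
      have hna₂ : a ∉ u₂.1 := by
        intro hc
        have h' : a ∈ (A \ {a, M}) \ V.1 := by rw [← u₂.2.2.1]; exact List.mem_toFinset.2 hc
        exact (memC.1 (Finset.mem_sdiff.1 h').1).2.1 rfl
      have := (split_unique h hna₂ hna₁).2
      exact desc_ne_nil (Finset.insert_nonempty _ _) this
    | Sum.inr ⟨V₁, u₁⟩, Sum.inr ⟨V₂, u₂⟩ =>
      have h : u₁.1 ++ a :: desc (insert M V₁.1) = u₂.1 ++ a :: desc (insert M V₂.1) := hval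
      have hna : ∀ (V : ((A \ {a, M}).powerset : Finset (Finset ℕ)))
          (u : GW ((A \ {a, M}) \ V.1)), a ∉ u.1 := by
        intro V u hc
        have h' : a ∈ (A \ {a, M}) \ V.1 := by rw [← u.2.2.1]; exact List.mem_toFinset.2 hc
        exact (memC.1 (Finset.mem_sdiff.1 h').1).2.1 rfl
      obtain ⟨hu, hdesc⟩ := split_unique h (hna V₁ u₁) (hna V₂ u₂)
      have hins : insert M V₁.1 = insert M V₂.1 := by
        rw [← desc_toFinset (insert M V₁.1), ← desc_toFinset (insert M V₂.1), hdesc]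
      have hMnot : ∀ (V : ((A \ {a, M}).powerset : Finset (Finset ℕ))), M ∉ V.1 := by
        intro V hc
        exact (memC.1 (Finset.mem_powerset.1 V.2 hc)).2.2 rfl
      have hV : V₁.1 = V₂.1 := by
        rw [← Finset.erase_insert (hMnot V₁), ← Finset.erase_insert (hMnot V₂), hins]
      have hV' : V₁ = V₂ := Subtype.ext hV
      subst hV'
      have hu' : u₁ = u₂ := Subtype.ext hu
      subst hu'
      rfl
  · rintro ⟨w, hwnd, hwA, hwG⟩
    have haw : a ∈ w := by rw [← List.mem_toFinset, hwA]; exact haA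
    obtain ⟨u, v, hw⟩ := List.mem_iff_append.1 haw
    subst hw
    rw [List.nodup_append] at hwnd
    obtain ⟨hund, hcons, hdisj⟩ := hwnd
    rw [List.nodup_cons] at hcons
    obtain ⟨hav, hvnd⟩ := hcons
    have hau : a ∉ u := fun hc => hdisj a hc a (List.mem_cons_self) rfl
    -- membership facts
    have humem : ∀ x ∈ u, x ∈ A ∧ x ≠ a := by
      intro x hx
      refine ⟨by rw [← hwA]; simp [hx], fun hc => hau (hc ▸ hx)⟩
    have hvmem : ∀ x ∈ v, x ∈ A ∧ x ≠ a := by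
      intro x hx
      refine ⟨by rw [← hwA]; simp [hx], fun hc => hav (hc ▸ hx)⟩
    have ha' : ∀ x ∈ u ++ v, a < x := by
      intro x hx
      rcases List.mem_append.1 hx with h | h
      · exact lt_of_le_of_ne (hmin x (humem x h).1) (Ne.symm (humem x h).2)
      · exact lt_of_le_of_ne (hmin x (hvmem x h).1) (Ne.symm (hvmem x h).2)
    by_cases hv : v = []
    · subst hv
      have ha'' : ∀ x ∈ u, a < x := fun x hx => ha' x (by simp [hx])
      refine ⟨Sum.inl ⟨u, hund, ?_, (good_append_singleton ha'').1 hwG⟩, rfl⟩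
      · ext x
        rw [Finset.mem_erase, ← hwA]
        simp only [List.mem_toFinset, List.toFinset_append, Finset.mem_union,
          List.toFinset_cons, List.toFinset_nil, LawfulSingleton.insert_empty_eq, Finset.mem_singleton,
          List.mem_append, List.mem_cons, List.not_mem_nil, or_false]
        constructor
        · intro hx
          exact ⟨(humem x hx).2, Or.inl hx⟩
        · rintro ⟨hne, hx | rfl⟩
          · exact hx
          · exact absurd rfl hne
    · obtain ⟨hGu, hchain, hhd⟩ := (good_append_cons hv hvnd ha').1 hwG
      have hvpw : v.Pairwise (· > ·) := List.isChain_iff_pairwise.1 hchain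
      have hdv : v.headD 0 ∈ v := by
        cases v with
        | nil => exact absurd rfl hv
        | cons c t => simp
      have hMv : M ∈ v := by
        have hMw : M ∈ u ++ a :: v := by rw [← List.mem_toFinset, hwA]; exact hMA
        rcases List.mem_append.1 hMw with h | h
        · exact absurd (hhd M h) (not_lt.2 (hmax _ (hvmem _ hdv).1))
        · rcases List.mem_cons.1 h with h2 | h2
          · exact absurd h2.symm haM
          · exact h2
      have hhdM : v.headD 0 = M := head_eq_max hvnd hvpw hMv (fun x hx => hmax x (hvmem x hx).1)
      set V : Finset ℕ := v.toFinset.erase M with hV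
      have hVC : V ∈ (A \ {a, M}).powerset := by
        rw [Finset.mem_powerset]
        intro x hx
        rw [hV, Finset.mem_erase, List.mem_toFinset] at hx
        exact memC.2 ⟨(hvmem x hx.2).1, (hvmem x hx.2).2, hx.1⟩
      have hinsV : insert M V = v.toFinset := Finset.insert_erase (List.mem_toFinset.2 hMv)
      have hdescv : desc (insert M V) = v := by
        rw [hinsV]
        exact (eq_desc_of_sorted hvnd hvpw).symm
      have huset : u.toFinset = (A \ {a, M}) \ V := by
        ext x
        rw [Finset.mem_sdiff, memC, List.mem_toFinset]
        constructor
        · intro hx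
          have hMx : x ≠ M := fun hc => hdisj x hx x (List.mem_cons_of_mem _ (hc ▸ hMv)) rfl
          refine ⟨⟨(humem x hx).1, (humem x hx).2, hMx⟩, ?_⟩
          rw [hV, Finset.mem_erase, List.mem_toFinset]
          rintro ⟨-, hc⟩
          exact hdisj x hx x (List.mem_cons_of_mem _ hc) rfl
        · rintro ⟨⟨hxA, hxa, hxM⟩, hxV⟩
          have : x ∈ u ++ a :: v := by rw [← List.mem_toFinset, hwA]; exact hxA
          rcases List.mem_append.1 this with h | h
          · exact h
          · rcases List.mem_cons.1 h with h2 | h2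
            · exact absurd h2 hxa
            · exact absurd (by rw [hV, Finset.mem_erase, List.mem_toFinset]; exact ⟨hxM, h2⟩) hxV
      refine ⟨Sum.inr ⟨⟨V, hVC⟩, ⟨u, hund, huset, hGu⟩⟩, ?_⟩
      apply Subtype.ext
      show u ++ a :: desc (insert M V) = u ++ a :: v
      rw [hdescv]

lemma card_sigma' {ι : Type} [Fintype ι] (F : ι → Type) [∀ i, Finite (F i)] :
    Nat.card (Σ i, F i) = ∑ i, Nat.card (F i) := by
  letI : ∀ i, Fintype (F i) := fun i => Fintype.ofFinite _
  simp [Nat.card_eq_fintype_card, Fintype.card_sigma]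

include haA hMA haM hmin hmax in
lemma W_rec : W A = W (A.erase a) +
    ∑ V ∈ (A \ {a, M}).powerset, W ((A \ {a, M}) \ V) := by
  have h1 : W A = Nat.card (T A a M) :=
    (Nat.card_eq_of_bijective _ (gmap_bijective haA hMA haM hmin hmax)).symm
  rw [h1, T, Nat.card_sum, card_sigma']
  congr 1
  rw [← Finset.sum_coe_sort ((A \ {a, M}).powerset) (fun V => W ((A \ {a, M}) \ V))]
  rfl

end Main

lemma b_rec (n : ℕ) : b (n + 2) = b (n + 1) + ∑ k ∈ Finset.range (n + 1), Nat.choose n k * b k := by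
  have haA : (0 : ℕ) ∈ Finset.range (n + 2) := by simp
  have hMA : (n + 1) ∈ Finset.range (n + 2) := by simp
  have haM : (0 : ℕ) ≠ n + 1 := by omega
  have hmin : ∀ x ∈ Finset.range (n + 2), 0 ≤ x := fun x _ => Nat.zero_le x
  have hmax : ∀ x ∈ Finset.range (n + 2), x ≤ n + 1 := fun x hx => by
    have := Finset.mem_range.1 hx; omega
  set C : Finset ℕ := Finset.range (n + 2) \ {0, n + 1} with hC
  have hsub : ({0, n + 1} : Finset ℕ) ⊆ Finset.range (n + 2) := by
    intro x hx
    rcases Finset.mem_insert.1 hx with rfl | hx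
    · exact haA
    · rw [Finset.mem_singleton] at hx; subst hx; exact hMA
  have hCcard : C.card = n := by
    rw [hC, Finset.card_sdiff_of_subset hsub, Finset.card_range,
      Finset.card_insert_of_notMem (by simp [haM]), Finset.card_singleton]
    omega
  have h1 : b (n + 2) = W (Finset.range (n + 2)) := b_eq_W _
  rw [h1, W_rec haA hMA haM hmin hmax]
  congr 1
  · have hcard : ((Finset.range (n + 2)).erase 0).card = n + 1 := by
      rw [Finset.card_erase_of_mem haA, Finset.card_range]
      omega
    rw [W_eq_of_card (B := Finset.range (n + 1)) (by rw [hcard, Finset.card_range])]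
    exact (b_eq_W _).symm
  · have hWV : ∀ V ∈ C.powerset, W (C \ V) = b (n - V.card) := by
      intro V hV
      have hVC := Finset.mem_powerset.1 hV
      have hc : (C \ V).card = n - V.card := by
        rw [Finset.card_sdiff_of_subset hVC, hCcard]
      rw [W_eq_of_card (B := Finset.range (n - V.card)) (by rw [hc, Finset.card_range])]
      exact (b_eq_W _).symm
    rw [Finset.sum_congr rfl hWV, Finset.sum_powerset C (fun V => b (n - V.card))]
    have hinner : ∀ j ∈ Finset.range (C.card + 1),
        ∑ V ∈ Finset.powersetCard j C, b (n - V.card) = Nat.choose n j * b (n - j) := by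
      intro j hj
      rw [Finset.sum_congr rfl (fun V hV => by rw [(Finset.mem_powersetCard.1 hV).2]),
        Finset.sum_const, Finset.card_powersetCard, hCcard, smul_eq_mul]
    rw [Finset.sum_congr rfl hinner, hCcard]
    calc ∑ j ∈ Finset.range (n + 1), Nat.choose n j * b (n - j)
        = ∑ j ∈ Finset.range (n + 1), Nat.choose n (n - j) * b (n - j) :=
          Finset.sum_congr rfl (fun j hj => by
            rw [Nat.choose_symm (by have := Finset.mem_range.1 hj; omega)])
      _ = ∑ k ∈ Finset.range (n + 1), Nat.choose n k * b k := by
          have h := Finset.sum_range_reflect (fun k => Nat.choose n k * b k) (n + 1)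
          simp only [Nat.add_sub_cancel] at h
          exact h

instance decC1 {n : ℕ} (π : Equiv.Perm (Fin n)) : Decidable (Contains1'23 π) :=
  decidable_of_iff (∃ i j j' : Fin n, i < j ∧ (j' : ℕ) = (j : ℕ) + 1 ∧ π i < π j ∧ π j < π j')
    Iff.rfl

instance decC2 {n : ℕ} (π : Equiv.Perm (Fin n)) : Decidable (Contains3'12 π) :=
  decidable_of_iff (∃ i j j' : Fin n, i < j ∧ (j' : ℕ) = (j : ℕ) + 1 ∧ π j < π j' ∧ π j' < π i)
    Iff.rfl

theorem stmt18 :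
    b 0 = 1 ∧ b 1 = 1 ∧ b 2 = 2 ∧
    ∀ n : ℕ, b (n + 2) = b (n + 1) + ∑ k ∈ Finset.range (n + 1), Nat.choose n k * b k := by
  refine ⟨?_, ?_, ?_, b_rec⟩
  · rw [b, Nat.card_eq_fintype_card]; decide
  · rw [b, Nat.card_eq_fintype_card]; decide
  · rw [b, Nat.card_eq_fintype_card]; decide
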